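/- Let ε_i, ε_j, ε_{j'} be three mutually independent random vectors in ℝ^p with i.i.d. N(0,σ²) coordinates, let c_{ij}, c_{ij'} ∈ ℝ^p be fixed vectors with c_{jj'} := c_{ij'} − c_{ij}, and set A_{ij} = ‖c_{ij} + ε_i − ε_j‖₂, A_{ij'} = ‖c_{ij'} + ε_i − ε_{j'}‖₂, λ_{ij} = ‖c_{ij}‖₂/(√2 σ), λ_{ij'} = ‖c_{ij'}‖₂/(√2 σ), λ_{jj'} = ‖c_{jj'}‖₂/(√2 σ). Then E(A_{ij}² A_{ij'}) ≥ −σ²(p + λ_{ij}² + λ_{ij'}² − λ_{jj'}²) − E(A_{ij'}). -/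

import Mathlib

open MeasureTheory ProbabilityTheory

/-- A family of random vectors in `ℝ^p` such that all coordinates (across the whole family)
are mutually independent and each coordinate is Gaussian `N(0, σ²)`. -/
def IIDGaussianCoords {Ω : Type*} [MeasurableSpace Ω] (P : Measure Ω)
    {ι : Type*} {p : ℕ} (σ : ℝ) (ε : ι → Ω → EuclideanSpace ℝ (Fin p)) : Prop :=
  (∀ i, Measurable (ε i)) ∧
  iIndepFun (fun q : ι × Fin p => fun ω => ε q.1 ω q.2) P ∧
  ∀ i k, Measure.map (fun ω => ε i ω k) P = gaussianReal 0 ⟨σ ^ 2, sq_nonneg σ⟩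

section Auxiliary
open Real NNReal ENNReal Set

lemma integrable_pow_mul_exp (b : ℝ) (hb : 0 < b) (n : ℕ) :
    Integrable (fun x : ℝ => x ^ n * Real.exp (-b * x ^ 2)) := by
  have h := integrable_rpow_mul_exp_neg_mul_sq hb (s := (n : ℝ)) (lt_of_lt_of_le neg_one_lt_zero (Nat.cast_nonneg n))
  simpa [Real.rpow_natCast] using h

lemma gaussianPDFReal_zero_eq (v : ℝ≥0) (x : ℝ) :
    gaussianPDFReal 0 v x = (Real.sqrt (2 * π * v))⁻¹ * Real.exp (-(2 * (v:ℝ))⁻¹ * x ^ 2) := by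
  rw [gaussianPDFReal]
  congr 1
  rw [sub_zero]
  congr 1
  by_cases h : (v:ℝ) = 0
  · simp [h]
  · field_simp
lemma integral_gaussianReal_eq {v : ℝ≥0} (hv : v ≠ 0) (g : ℝ → ℝ) :
    ∫ x, g x ∂(gaussianReal 0 v) = ∫ x, gaussianPDFReal 0 v x * g x := by
  rw [gaussianReal_of_var_ne_zero _ hv, gaussianPDF_def]
  have : (fun x => ENNReal.ofReal (gaussianPDFReal 0 v x))
      = fun x => ((Real.toNNReal (gaussianPDFReal 0 v x) : ℝ≥0) : ℝ≥0∞) := rfl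
  rw [this, integral_withDensity_eq_integral_smul
    (by exact (measurable_gaussianPDFReal 0 v).real_toNNReal) g]
  refine integral_congr_ae (Filter.Eventually.of_forall fun x => ?_)
  simp [NNReal.smul_def, Real.coe_toNNReal _ (gaussianPDFReal_nonneg 0 v x)]

lemma integrable_gaussianReal_iff {v : ℝ≥0} (hv : v ≠ 0) (g : ℝ → ℝ) :
    Integrable g (gaussianReal 0 v) ↔ Integrable (fun x => gaussianPDFReal 0 v x * g x) := by
  rw [gaussianReal_of_var_ne_zero _ hv, gaussianPDF_def]
  have : (fun x => ENNReal.ofReal (gaussianPDFReal 0 v x))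
      = fun x => ((Real.toNNReal (gaussianPDFReal 0 v x) : ℝ≥0) : ℝ≥0∞) := rfl
  rw [this, integrable_withDensity_iff_integrable_smul
    (by exact (measurable_gaussianPDFReal 0 v).real_toNNReal)]
  constructor <;> intro h <;> refine h.congr (Filter.Eventually.of_forall fun x => ?_) <;>
    simp [NNReal.smul_def, Real.coe_toNNReal _ (gaussianPDFReal_nonneg 0 v x)]

lemma integrable_pow_gaussianReal {v : ℝ≥0} (hv : v ≠ 0) (n : ℕ) :
    Integrable (fun x => x ^ n) (gaussianReal 0 v) := by
  have hvpos : (0:ℝ) < (v:ℝ) := by positivity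
  rw [integrable_gaussianReal_iff hv]
  have : (fun x : ℝ => gaussianPDFReal 0 v x * x ^ n)
      = fun x => (Real.sqrt (2 * π * v))⁻¹ * (x ^ n * Real.exp (-(2 * (v:ℝ))⁻¹ * x ^ 2)) := by
    ext x; rw [gaussianPDFReal_zero_eq]; ring
  rw [this]
  exact (integrable_pow_mul_exp _ (by positivity) n).const_mul _

lemma integral_id_gaussianReal {v : ℝ≥0} (hv : v ≠ 0) :
    ∫ x, x ∂(gaussianReal 0 v) = 0 := by
  rw [integral_gaussianReal_eq hv]
  set f : ℝ → ℝ := fun x => gaussianPDFReal 0 v x * x with hf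
  have hodd : ∀ x, f (-x) = - f x := by
    intro x
    simp only [hf, gaussianPDFReal_zero_eq, neg_sq, mul_neg, neg_mul]
  have h1 : ∫ x, f (-x) = ∫ x, f x :=
    (Measure.measurePreserving_neg (volume : Measure ℝ)).integral_comp
      (Homeomorph.neg ℝ).measurableEmbedding f
  have h2 : ∫ x, f (-x) = - ∫ x, f x := by
    simp_rw [hodd]; exact integral_neg f
  linarith [h1, h2]

lemma integral_sq_mul_exp (b : ℝ) (hb : 0 < b) :
    ∫ x : ℝ, x ^ 2 * Real.exp (-b * x ^ 2) = b ^ (-(3:ℝ)/2) * (Real.sqrt π / 2) := by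
  have habs : ∫ x : ℝ, x ^ 2 * Real.exp (-b * x ^ 2)
      = 2 * ∫ x in Ioi (0:ℝ), x ^ 2 * Real.exp (-b * x ^ 2) := by
    rw [← integral_comp_abs (f := fun x => x ^ 2 * Real.exp (-b * x ^ 2))]
    refine integral_congr_ae (Filter.Eventually.of_forall fun x => ?_)
    simp [sq_abs]
  have hIoi : ∫ x in Ioi (0:ℝ), x ^ 2 * Real.exp (-b * x ^ 2)
      = b ^ (-(3:ℝ)/2) * (1/2) * Real.Gamma (3/2) := by
    have h := integral_rpow_mul_exp_neg_mul_rpow (p := 2) (q := 2) (b := b)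
      zero_lt_two (by norm_num) hb
    have h2 : ∫ x in Ioi (0:ℝ), x ^ (2:ℝ) * Real.exp (-b * x ^ (2:ℝ))
        = ∫ x in Ioi (0:ℝ), x ^ 2 * Real.exp (-b * x ^ 2) := by
      refine setIntegral_congr_fun measurableSet_Ioi (fun x hx => ?_)
      rw [show (2:ℝ) = ((2:ℕ):ℝ) by norm_num, Real.rpow_natCast]
    rw [← h2, h]
    norm_num
  have hgamma : Real.Gamma (3/2) = Real.sqrt π / 2 := by
    rw [show (3:ℝ)/2 = 1/2 + 1 by norm_num, Real.Gamma_add_one (by norm_num),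
      Real.Gamma_one_half_eq]
    ring
  rw [habs, hIoi, hgamma]; ring

lemma integral_sq_gaussianReal {v : ℝ≥0} (hv : v ≠ 0) :
    ∫ x, x ^ 2 ∂(gaussianReal 0 v) = v := by
  have hvpos : (0:ℝ) < (v:ℝ) := by positivity
  rw [integral_gaussianReal_eq hv]
  have : (fun x : ℝ => gaussianPDFReal 0 v x * x ^ 2)
      = fun x => (Real.sqrt (2 * π * v))⁻¹ * (x ^ 2 * Real.exp (-(2*(v:ℝ))⁻¹ * x ^ 2)) := by
    ext x; rw [gaussianPDFReal_zero_eq]; ring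
  rw [this, integral_const_mul, integral_sq_mul_exp _ (by positivity)]
  set w : ℝ := 2 * (v:ℝ) with hw
  have hwpos : 0 < w := by positivity
  have h0 : w ^ ((3:ℝ)/2) = w * Real.sqrt w := by
    rw [Real.sqrt_eq_rpow]
    nth_rewrite 2 [← Real.rpow_one w]
    rw [← Real.rpow_add hwpos]
    norm_num
  have h1 : (w⁻¹) ^ (-(3:ℝ)/2) = w * Real.sqrt w := by
    rw [← Real.rpow_neg_one, ← Real.rpow_mul hwpos.le, ← h0]
    norm_num
  have h2 : Real.sqrt (2 * π * v) = Real.sqrt π * Real.sqrt w := by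
    rw [← Real.sqrt_mul Real.pi_pos.le, hw]
    congr 1; ring
  rw [h1, h2]
  have hsw : 0 < Real.sqrt w := Real.sqrt_pos.mpr hwpos
  have hsp : 0 < Real.sqrt π := Real.sqrt_pos.mpr Real.pi_pos
  field_simp
  ring

lemma memℒp_of_integrable_pow {μ : Measure ℝ} (n : ℕ) (hn : n ≠ 0)
    (h : Integrable (fun x => x ^ n) μ) : MemLp (fun x : ℝ => x) n μ := by
  refine ⟨aestronglyMeasurable_id, ?_⟩
  rw [eLpNorm_eq_lintegral_rpow_enorm_toReal (by exact_mod_cast hn) (by simp)]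
  refine ENNReal.rpow_lt_top_of_nonneg (by positivity) ?_
  have := h.2
  rw [HasFiniteIntegral] at this
  refine ne_of_lt (lt_of_le_of_lt (le_of_eq ?_) this)
  refine lintegral_congr fun x => ?_
  rw [ENNReal.toReal_natCast]
  rw [ENNReal.rpow_natCast, enorm_pow]

end Auxiliary

section Main
open Real NNReal ENNReal Set RealInnerProductSpace

/-- scalar expansion lemma -/
lemma scalar_integral {Ω : Type*} [MeasurableSpace Ω] (P : Measure Ω) [IsProbabilityMeasure P]
    (a b s : ℝ) (X Y Z : Ω → ℝ)
    (hX : MemLp X 2 P) (hY : MemLp Y 2 P) (hZ : MemLp Z 2 P)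
    (hXY : IndepFun X Y P) (hXZ : IndepFun X Z P) (hYZ : IndepFun Y Z P)
    (hX0 : ∫ ω, X ω ∂P = 0) (hY0 : ∫ ω, Y ω ∂P = 0) (hZ0 : ∫ ω, Z ω ∂P = 0)
    (hX2 : ∫ ω, X ω ^ 2 ∂P = s) :
    ∫ ω, (a + X ω - Y ω) * (b + X ω - Z ω) ∂P = a * b + s := by
  have h2 : (1:ℝ≥0∞) / 1 = 1 / 2 + 1 / 2 := by
    norm_num
    exact ENNReal.inv_two_add_inv_two.symm
  have iX : Integrable X P := memLp_one_iff_integrable.mp (hX.mono_exponent (by norm_num))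
  have iY : Integrable Y P := memLp_one_iff_integrable.mp (hY.mono_exponent (by norm_num))
  have iZ : Integrable Z P := memLp_one_iff_integrable.mp (hZ.mono_exponent (by norm_num))
  have mul_int : ∀ (F G : Ω → ℝ), MemLp F 2 P → MemLp G 2 P →
      Integrable (fun ω => F ω * G ω) P := by
    intro F G hF hG
    have := hG.smul hF (r := 1)
    rw [memLp_one_iff_integrable] at this
    exact this
  have iXX := mul_int X X hX hX
  have iXZ := mul_int X Z hX hZ
  have iXY := mul_int X Y hX hY
  have iYZ := mul_int Y Z hY hZ
  have eXZ : ∫ ω, X ω * Z ω ∂P = 0 := by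
    rw [hXZ.integral_fun_mul_eq_mul_integral hX.aestronglyMeasurable hZ.aestronglyMeasurable, hX0, hZ0]; ring
  have eXY : ∫ ω, X ω * Y ω ∂P = 0 := by
    rw [hXY.integral_fun_mul_eq_mul_integral hX.aestronglyMeasurable hY.aestronglyMeasurable, hX0, hY0]; ring
  have eYZ : ∫ ω, Y ω * Z ω ∂P = 0 := by
    rw [hYZ.integral_fun_mul_eq_mul_integral hY.aestronglyMeasurable hZ.aestronglyMeasurable, hY0, hZ0]; ring
  have hexp : (fun ω => (a + X ω - Y ω) * (b + X ω - Z ω))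
      = fun ω => (a * b + ((a+b) * X ω + (-a) * Z ω + (-b) * Y ω))
          + ((X ω * X ω + (-1) * (X ω * Z ω)) + ((-1) * (X ω * Y ω) + Y ω * Z ω)) := by
    ext ω; ring
  have iL1 : Integrable (fun ω => (a+b) * X ω + (-a) * Z ω) P :=
    (iX.const_mul _).add (iZ.const_mul _)
  have iL2 : Integrable (fun ω => (a+b) * X ω + (-a) * Z ω + (-b) * Y ω) P :=
    iL1.add (iY.const_mul _)
  have iLin : Integrable (fun ω => a * b + ((a+b) * X ω + (-a) * Z ω + (-b) * Y ω)) P :=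
    (integrable_const _).add iL2
  have iQ1 : Integrable (fun ω => X ω * X ω + (-1) * (X ω * Z ω)) P :=
    iXX.add (iXZ.const_mul _)
  have iQ2 : Integrable (fun ω => (-1) * (X ω * Y ω) + Y ω * Z ω) P :=
    (iXY.const_mul _).add iYZ
  have iQuad : Integrable (fun ω => (X ω * X ω + (-1) * (X ω * Z ω))
      + ((-1) * (X ω * Y ω) + Y ω * Z ω)) P := iQ1.add iQ2
  have eXX : ∫ ω, X ω * X ω ∂P = s := by rw [← hX2]; congr 1; ext ω; ring
  rw [hexp, integral_add iLin iQuad,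
    integral_add (integrable_const _) iL2,
    integral_add iL1 (iY.const_mul _),
    integral_add (iX.const_mul _) (iZ.const_mul _),
    integral_add iQ1 iQ2,
    integral_add iXX (iXZ.const_mul _), integral_add (iXY.const_mul _) iYZ,
    integral_const_mul, integral_const_mul, integral_const_mul, integral_const_mul,
    integral_const_mul, integral_const_mul, hX0, hY0, hZ0, eXZ, eXY, eYZ, eXX, integral_const]
  simp

lemma main_aux {Ω : Type*} [MeasurableSpace Ω] (P : Measure Ω) [IsProbabilityMeasure P]
    {p : ℕ} (u w : Ω → EuclideanSpace ℝ (Fin p)) (C : ℝ)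
    (hint : Integrable (fun ω => ‖u ω‖ ^ 2 * ‖w ω‖) P)
    (hSint : Integrable (fun ω => ⟪u ω, w ω⟫) P)
    (hwint : Integrable (fun ω => ‖w ω‖) P)
    (hSval : ∫ ω, ⟪u ω, w ω⟫ ∂P = C) :
    ∫ ω, ‖u ω‖ ^ 2 * ‖w ω‖ ∂P ≥ -C - ∫ ω, ‖w ω‖ ∂P := by
  have hpt : ∀ ω, -⟪u ω, w ω⟫ - ‖w ω‖ ≤ ‖u ω‖ ^ 2 * ‖w ω‖ := by
    intro ω
    have h1 : |⟪u ω, w ω⟫| ≤ ‖u ω‖ * ‖w ω‖ := abs_real_inner_le_norm _ _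
    have h2 : -⟪u ω, w ω⟫ ≤ |⟪u ω, w ω⟫| := neg_le_abs _
    nlinarith [norm_nonneg (u ω), norm_nonneg (w ω), sq_nonneg (‖u ω‖ - 1)]
  have hmono : ∫ ω, (-⟪u ω, w ω⟫ - ‖w ω‖) ∂P ≤ ∫ ω, ‖u ω‖ ^ 2 * ‖w ω‖ ∂P :=
    integral_mono (hSint.neg.sub hwint) hint hpt
  have hN : Integrable (fun ω => -⟪u ω, w ω⟫) P := hSint.neg
  have heq : ∫ ω, (-⟪u ω, w ω⟫ - ‖w ω‖) ∂P = -C - ∫ ω, ‖w ω‖ ∂P := by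
    rw [integral_sub hN hwint, integral_neg, hSval]
  linarith

set_option maxHeartbeats 800000 in
theorem stmt_10 {Ω : Type*} [MeasurableSpace Ω] (P : Measure Ω) [IsProbabilityMeasure P]
    (p : ℕ) (hp : 1 ≤ p) (σ : ℝ) (hσ : 0 < σ)
    (ε : Fin 3 → Ω → EuclideanSpace ℝ (Fin p))
    (hiid : IIDGaussianCoords P σ ε)
    (cij cij' : EuclideanSpace ℝ (Fin p)) :
    ∫ ω, ‖cij + ε 0 ω - ε 1 ω‖ ^ 2 * ‖cij' + ε 0 ω - ε 2 ω‖ ∂P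
      ≥ -(σ ^ 2) * (p + (‖cij‖ / (Real.sqrt 2 * σ)) ^ 2
            + (‖cij'‖ / (Real.sqrt 2 * σ)) ^ 2 - (‖cij' - cij‖ / (Real.sqrt 2 * σ)) ^ 2)
        - ∫ ω, ‖cij' + ε 0 ω - ε 2 ω‖ ∂P := by
  obtain ⟨hmeas, hindep, hlaw⟩ := hiid
  set V : ℝ≥0 := ⟨σ ^ 2, sq_nonneg σ⟩ with hV
  have hVne : V ≠ 0 := by
    intro h
    have : (V : ℝ) = 0 := by rw [h]; simp
    rw [hV] at this
    change σ ^ 2 = 0 at this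
    nlinarith
  -- coordinate facts
  have hXm : ∀ (i : Fin 3) (k : Fin p), Measurable (fun ω => ε i ω k) :=
    fun i k => (measurable_pi_apply k).comp ((WithLp.measurable_ofLp 2 _).comp (hmeas i))
  have hX4 : ∀ (i : Fin 3) (k : Fin p), MemLp (fun ω => ε i ω k) 4 P := by
    intro i k
    have h0 : MemLp (fun x : ℝ => x) ((4:ℕ):ℝ≥0∞) (gaussianReal 0 V) :=
      memℒp_of_integrable_pow 4 (by norm_num) (integrable_pow_gaussianReal hVne 4)
    rw [← hlaw i k] at h0
    have := (memLp_map_measure_iff aestronglyMeasurable_id (hXm i k).aemeasurable).mp h0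
    simpa using this
  have hX2 : ∀ (i : Fin 3) (k : Fin p), MemLp (fun ω => ε i ω k) 2 P :=
    fun i k => (hX4 i k).mono_exponent (by norm_num)
  have hXint0 : ∀ (i : Fin 3) (k : Fin p), ∫ ω, ε i ω k ∂P = 0 := by
    intro i k
    have h := integral_map (φ := fun ω => ε i ω k) (μ := P)
      (hXm i k).aemeasurable (f := fun x : ℝ => x) aestronglyMeasurable_id
    rw [← h, hlaw i k]
    exact integral_id_gaussianReal hVne
  have hXsq : ∀ (i : Fin 3) (k : Fin p), ∫ ω, (ε i ω k) ^ 2 ∂P = σ ^ 2 := by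
    intro i k
    have h := integral_map (φ := fun ω => ε i ω k) (μ := P)
      (hXm i k).aemeasurable (f := fun x : ℝ => x ^ 2)
      (measurable_id.pow_const 2).aestronglyMeasurable
    rw [← h, hlaw i k]
    exact integral_sq_gaussianReal hVne
  have hpair : ∀ (i j : Fin 3) (k l : Fin p), (i, k) ≠ (j, l) →
      IndepFun (fun ω => ε i ω k) (fun ω => ε j ω l) P :=
    fun i j k l h => hindep.indepFun h
  -- per-coordinate integral
  have hkey : ∀ k : Fin p,
      ∫ ω, (cij k + ε 0 ω k - ε 1 ω k) * (cij' k + ε 0 ω k - ε 2 ω k) ∂P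
        = cij k * cij' k + σ ^ 2 := by
    intro k
    exact scalar_integral P (cij k) (cij' k) (σ ^ 2) _ _ _
      (hX2 0 k) (hX2 1 k) (hX2 2 k)
      (hpair 0 1 k k (by simp [Prod.ext_iff]))
      (hpair 0 2 k k (by simp [Prod.ext_iff]))
      (hpair 1 2 k k (by simp [Prod.ext_iff]))
      (hXint0 0 k) (hXint0 1 k) (hXint0 2 k) (hXsq 0 k)
  -- ENNReal exponent arithmetic
  have h44 : (1:ℝ≥0∞)/2 = 1/4 + 1/4 := by
    rw [one_div, one_div, ← two_mul, show (4:ℝ≥0∞) = 2*2 by norm_num,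
      ENNReal.mul_inv (by norm_num) (by norm_num), ← mul_assoc,
      ENNReal.mul_inv_cancel (by norm_num) (by norm_num), one_mul]
  have h22 : (1:ℝ≥0∞)/1 = 1/2 + 1/2 := by
    rw [one_div, one_div, ← two_mul, ENNReal.mul_inv_cancel (by norm_num) (by norm_num)]
    simp
  -- Memℒp of norms
  have habs4 : ∀ (i : Fin 3) (k : Fin p), MemLp (fun ω => |ε i ω k|) 4 P := by
    intro i k
    simpa [Real.norm_eq_abs] using (hX4 i k).norm
  have hsum4 : ∀ i : Fin 3, MemLp (fun ω => ∑ k, |ε i ω k|) 4 P :=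
    fun i => memLp_finset_sum Finset.univ (fun k _ => habs4 i k)
  have hnormle : ∀ (x : EuclideanSpace ℝ (Fin p)), ‖x‖ ≤ ∑ k, |x k| := by
    intro x
    rw [EuclideanSpace.norm_eq]
    have h1 : ∑ k, ‖x k‖ ^ 2 ≤ (∑ k, ‖x k‖) ^ 2 :=
      Finset.sum_sq_le_sq_sum_of_nonneg (fun k _ => norm_nonneg _)
    calc Real.sqrt (∑ k, ‖x k‖ ^ 2) ≤ Real.sqrt ((∑ k, ‖x k‖) ^ 2) := Real.sqrt_le_sqrt h1
    _ = ∑ k, ‖x k‖ := Real.sqrt_sq (Finset.sum_nonneg fun k _ => norm_nonneg _)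
    _ = ∑ k, |x k| := by simp [Real.norm_eq_abs]
  have hnε : ∀ i : Fin 3, MemLp (fun ω => ‖ε i ω‖) 4 P := by
    intro i
    refine (hsum4 i).of_le ((hmeas i).norm.aestronglyMeasurable) ?_
    refine Filter.Eventually.of_forall (fun ω => ?_)
    rw [Real.norm_eq_abs, Real.norm_eq_abs, abs_of_nonneg (norm_nonneg _),
      abs_of_nonneg (Finset.sum_nonneg fun k _ => abs_nonneg _)]
    exact hnormle _
  have humeas : Measurable (fun ω => cij + ε 0 ω - ε 1 ω) :=
    (measurable_const.add (hmeas 0)).sub (hmeas 1)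
  have hwmeas : Measurable (fun ω => cij' + ε 0 ω - ε 2 ω) :=
    (measurable_const.add (hmeas 0)).sub (hmeas 2)
  have hnu4 : MemLp (fun ω => ‖cij + ε 0 ω - ε 1 ω‖) 4 P := by
    have hg : MemLp (fun ω => ‖cij‖ + ‖ε 0 ω‖ + ‖ε 1 ω‖) 4 P :=
      ((memLp_const ‖cij‖).add (hnε 0)).add (hnε 1)
    refine hg.of_le humeas.norm.aestronglyMeasurable ?_
    refine Filter.Eventually.of_forall (fun ω => ?_)
    have hb : ‖cij + ε 0 ω - ε 1 ω‖ ≤ ‖cij‖ + ‖ε 0 ω‖ + ‖ε 1 ω‖ :=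
      (norm_sub_le _ _).trans (add_le_add_left (norm_add_le _ _) _)
    rw [Real.norm_eq_abs, Real.norm_eq_abs, abs_of_nonneg (norm_nonneg _),
      abs_of_nonneg (by positivity)]
    exact hb
  have hnw4 : MemLp (fun ω => ‖cij' + ε 0 ω - ε 2 ω‖) 4 P := by
    have hg : MemLp (fun ω => ‖cij'‖ + ‖ε 0 ω‖ + ‖ε 2 ω‖) 4 P :=
      ((memLp_const ‖cij'‖).add (hnε 0)).add (hnε 2)
    refine hg.of_le hwmeas.norm.aestronglyMeasurable ?_
    refine Filter.Eventually.of_forall (fun ω => ?_)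
    have hb : ‖cij' + ε 0 ω - ε 2 ω‖ ≤ ‖cij'‖ + ‖ε 0 ω‖ + ‖ε 2 ω‖ :=
      (norm_sub_le _ _).trans (add_le_add_left (norm_add_le _ _) _)
    rw [Real.norm_eq_abs, Real.norm_eq_abs, abs_of_nonneg (norm_nonneg _),
      abs_of_nonneg (by positivity)]
    exact hb
  have hnu2sq : MemLp (fun ω => ‖cij + ε 0 ω - ε 1 ω‖ ^ 2) 2 P := by
    have h := hnu4.smul hnu4 (r := 2) (hpqr := ⟨by simpa [one_div] using h44.symm⟩)
    refine h.ae_eq (Filter.Eventually.of_forall fun ω => ?_)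
    simp [Pi.smul_apply, smul_eq_mul, sq]
  have hnw2 : MemLp (fun ω => ‖cij' + ε 0 ω - ε 2 ω‖) 2 P :=
    hnw4.mono_exponent (by norm_num)
  have hAint : Integrable (fun ω => ‖cij + ε 0 ω - ε 1 ω‖ ^ 2 * ‖cij' + ε 0 ω - ε 2 ω‖) P := by
    have h := hnw2.smul hnu2sq (r := 1)
    rw [memLp_one_iff_integrable] at h
    exact h
  have hnwint : Integrable (fun ω => ‖cij' + ε 0 ω - ε 2 ω‖) P :=
    memLp_one_iff_integrable.mp (hnw4.mono_exponent (by norm_num))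
  -- coordinates of u, w
  have hUk2 : ∀ k : Fin p, MemLp (fun ω => cij k + ε 0 ω k - ε 1 ω k) 2 P :=
    fun k => ((memLp_const (cij k)).add (hX2 0 k)).sub (hX2 1 k)
  have hWk2 : ∀ k : Fin p, MemLp (fun ω => cij' k + ε 0 ω k - ε 2 ω k) 2 P :=
    fun k => ((memLp_const (cij' k)).add (hX2 0 k)).sub (hX2 2 k)
  have hprodk : ∀ k : Fin p, Integrable
      (fun ω => (cij k + ε 0 ω k - ε 1 ω k) * (cij' k + ε 0 ω k - ε 2 ω k)) P := by
    intro k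
    have h := (hWk2 k).smul (hUk2 k) (r := 1)
    rw [memLp_one_iff_integrable] at h
    exact h
  have hinner : ∀ ω, ⟪(cij + ε 0 ω - ε 1 ω : EuclideanSpace ℝ (Fin p)), cij' + ε 0 ω - ε 2 ω⟫
      = ∑ k, (cij k + ε 0 ω k - ε 1 ω k) * (cij' k + ε 0 ω k - ε 2 ω k) := by
    intro ω
    rw [PiLp.inner_apply]
    refine Finset.sum_congr rfl (fun k _ => ?_)
    simp [RCLike.inner_apply, conj_trivial, mul_comm]
  have hSint : Integrable (fun ω =>
      ⟪(cij + ε 0 ω - ε 1 ω : EuclideanSpace ℝ (Fin p)), cij' + ε 0 ω - ε 2 ω⟫) P := by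
    refine (integrable_finset_sum Finset.univ (fun k _ => hprodk k)).congr ?_
    exact Filter.Eventually.of_forall (fun ω => (hinner ω).symm)
  have hSval : ∫ ω, ⟪(cij + ε 0 ω - ε 1 ω : EuclideanSpace ℝ (Fin p)), cij' + ε 0 ω - ε 2 ω⟫ ∂P
      = ⟪cij, cij'⟫ + p * σ ^ 2 := by
    rw [integral_congr_ae (Filter.Eventually.of_forall hinner),
      integral_finset_sum Finset.univ (fun k _ => hprodk k)]
    rw [Finset.sum_congr rfl (fun k _ => hkey k), Finset.sum_add_distrib, Finset.sum_const,
      Finset.card_univ, Fintype.card_fin, nsmul_eq_mul, PiLp.inner_apply]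
    simp [RCLike.inner_apply, conj_trivial, mul_comm]
  have hmain := main_aux P (fun ω => cij + ε 0 ω - ε 1 ω) (fun ω => cij' + ε 0 ω - ε 2 ω)
    (⟪cij, cij'⟫ + p * σ ^ 2) hAint hSint hnwint hSval
  have hRHS : -(σ ^ 2) * (p + (‖cij‖ / (Real.sqrt 2 * σ)) ^ 2
      + (‖cij'‖ / (Real.sqrt 2 * σ)) ^ 2 - (‖cij' - cij‖ / (Real.sqrt 2 * σ)) ^ 2)
      = -(⟪cij, cij'⟫ + p * σ ^ 2) := by
    have hns : ‖cij' - cij‖ ^ 2 = ‖cij'‖ ^ 2 - 2 * ⟪cij', cij⟫ + ‖cij‖ ^ 2 :=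
      norm_sub_sq_real _ _
    have hcomm : ⟪cij', cij⟫ = ⟪cij, cij'⟫ := real_inner_comm _ _
    have hσ2 : (Real.sqrt 2 * σ) ^ 2 = 2 * σ ^ 2 := by
      rw [mul_pow, Real.sq_sqrt (by norm_num : (2:ℝ) ≥ 0)]
    have hσ2ne : (2:ℝ) * σ ^ 2 ≠ 0 := by positivity
    rw [div_pow, div_pow, div_pow, hσ2, hns, hcomm]
    field_simp
    ring
  rw [ge_iff_le, hRHS]
  exact hmain


end Main
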